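/- The singular values of A_α(K⃗_{r,s}) are 0 with multiplicity s, αs with multiplicity r-1, and √(α²s² + (1-α)² s r) with multiplicity 1. -/

import Mathlib

open Matrix Real

open Polynomial in
/-- Determinant of `d • 1 + e • J` over a field, where `J` is all-ones. -/
lemma det_smul_one_add_smul_ones {K : Type*} [Field K] (n : ℕ) (hn : 0 < n) (d e : K)
    (hd : d ≠ 0) :
    Matrix.det (d • (1 : Matrix (Fin n) (Fin n) K) + e • Matrix.of (fun _ _ => (1 : K))) =
      d ^ (n - 1) * (d + n * e) := by
  have hA : IsUnit (d • (1 : Matrix (Fin n) (Fin n) K)).det := by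
    simp [det_smul, hd, isUnit_iff_ne_zero, pow_ne_zero]
  have hinv : (d • (1 : Matrix (Fin n) (Fin n) K))⁻¹ = d⁻¹ • 1 := by
    apply Matrix.inv_eq_right_inv
    rw [smul_mul, Matrix.mul_smul, one_mul, smul_smul, mul_inv_cancel₀ hd, one_smul]
  set U : Matrix (Fin n) (Fin 1) K := Matrix.of (fun _ _ => e) with hU
  set V : Matrix (Fin 1) (Fin n) K := Matrix.of (fun _ _ => (1 : K)) with hV
  have key : (d • (1 : Matrix (Fin n) (Fin n) K) + e • Matrix.of (fun _ _ => (1 : K)))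
      = d • 1 + U * V := by
    ext i j
    simp [hU, hV, Matrix.mul_apply]
  rw [key, Matrix.det_add_mul U V hA, hinv, det_smul, det_one, mul_one, Matrix.det_fin_one]
  simp only [Matrix.add_apply, Matrix.one_apply_eq, Matrix.mul_apply, hU, hV, Matrix.smul_apply,
    Matrix.one_apply, Matrix.of_apply, smul_eq_mul]
  have hpow : d ^ n = d ^ (n-1) * d := by
    rw [← pow_succ, Nat.sub_add_cancel hn]
  simp [Finset.sum_mul, mul_comm]
  rw [hpow]
  field_simp

open Polynomial in
/-- Characteristic polynomial of `a • 1 + b • J` over `ℝ`. -/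
lemma charpoly_smul_one_add_smul_ones (n : ℕ) (hn : 0 < n) (a b : ℝ) :
    (a • (1 : Matrix (Fin n) (Fin n) ℝ) + b • Matrix.of (fun _ _ => (1:ℝ))).charpoly
      = (X - C a) ^ (n-1) * (X - C (a + n*b)) := by
  classical
  set d : ℝ[X] := X - C a with hd_def
  have hchar : charmatrix (a • (1 : Matrix (Fin n) (Fin n) ℝ) + b • Matrix.of fun _ _ => (1:ℝ))
      = d • (1 : Matrix (Fin n) (Fin n) ℝ[X]) + (-C b) • Matrix.of (fun _ _ => (1:ℝ[X])) := by
    ext i j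
    by_cases h : i = j <;>
      simp [charmatrix_apply, Matrix.one_apply, h, hd_def, diagonal_apply] <;> ring
  set K := FractionRing ℝ[X]
  set f : ℝ[X] →+* K := algebraMap ℝ[X] K with hf_def
  have hf : Function.Injective f := IsFractionRing.injective ℝ[X] K
  have hd0 : f d ≠ 0 := by
    intro h
    have : d = 0 := hf (by simpa using h)
    exact X_sub_C_ne_zero a (hd_def ▸ this)
  apply hf
  rw [Matrix.charpoly, hchar, RingHom.map_det]
  have hmap : (d • (1 : Matrix (Fin n) (Fin n) ℝ[X])
      + (-C b) • Matrix.of fun _ _ => (1:ℝ[X])).map f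
      = f d • 1 + f (-C b) • Matrix.of (fun _ _ => (1:K)) := by
    ext i j
    by_cases h : i = j <;> simp [Matrix.one_apply, h]
  rw [RingHom.mapMatrix_apply, hmap, det_smul_one_add_smul_ones n hn _ _ hd0]
  have hrhs : (X - C (a + (n:ℕ)*b)) = d + (n : ℝ[X]) * (-C b) := by
    rw [hd_def]
    simp [C_add, C_mul]
    ring
  rw [_root_.map_mul, map_pow, hrhs, map_add, _root_.map_mul, map_natCast]

/-- The `A_α` matrix of the oriented complete bipartite graph `K⃗_{r,s}`: block matrix with
top-left block `αs I_r`, top-right block `(1-α) J_{r×s}`, and zero elsewhere. -/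
noncomputable def KrsAlpha (r s : ℕ) (α : ℝ) :
    Matrix (Fin r ⊕ Fin s) (Fin r ⊕ Fin s) ℝ :=
  Matrix.fromBlocks ((α * s) • (1 : Matrix (Fin r) (Fin r) ℝ))
    ((1 - α) • Matrix.of (fun _ _ => (1 : ℝ))) 0 0

/-- The singular values of `A_α(K⃗_{r,s})`, i.e. the square roots of the eigenvalues of
`A_α A_αᵀ`, are `0` with multiplicity `s`, `αs` with multiplicity `r-1`, and
`√(α²s² + (1-α)²sr)` with multiplicity `1`. -/
theorem stmt_4 (r s : ℕ) (hr : 0 < r) (hs : 0 < s) (α : ℝ) (hα0 : 0 ≤ α) (hα1 : α < 1) :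
    (((KrsAlpha r s α * (KrsAlpha r s α)ᵀ).charpoly.roots).map Real.sqrt) =
      Multiset.replicate s (0 : ℝ) + Multiset.replicate (r - 1) (α * s) +
        {Real.sqrt (α ^ 2 * s ^ 2 + (1 - α) ^ 2 * s * r)} := by
  classical
  open Polynomial in
  have hM : KrsAlpha r s α * (KrsAlpha r s α)ᵀ =
      Matrix.fromBlocks ((α^2*s^2) • (1 : Matrix (Fin r) (Fin r) ℝ)
        + ((1-α)^2*s) • Matrix.of (fun _ _ => (1:ℝ))) 0 0 0 := by
    ext (i|i) (j|j) <;>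
      simp [KrsAlpha, Matrix.mul_apply, Fintype.sum_sum_type, Matrix.one_apply,
        Finset.sum_ite_eq, apply_ite] <;>
    · by_cases h : i = j <;> simp [h] <;> ring
  set a : ℝ := α^2*s^2 with ha
  set b : ℝ := a + r * ((1-α)^2*s) with hb
  have h0 : (0 : Matrix (Fin s) (Fin s) ℝ).charpoly = (X - C (0:ℝ)) ^ (s-1) * (X - C 0) := by
    have := charpoly_smul_one_add_smul_ones s hs 0 0
    simpa using this
  have hcp : (KrsAlpha r s α * (KrsAlpha r s α)ᵀ).charpoly =
      (X - C a) ^ (r-1) * (X - C b) * ((X - C (0:ℝ)) ^ (s-1) * (X - C 0)) := by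
    rw [hM, Matrix.charpoly_fromBlocks_zero₂₁, h0,
      charpoly_smul_one_add_smul_ones r hr a ((1-α)^2*s)]
  set m : Multiset ℝ := Multiset.replicate (r-1) a + {b} + Multiset.replicate s 0 with hm
  have hprod : (KrsAlpha r s α * (KrsAlpha r s α)ᵀ).charpoly
      = (m.map fun c => X - C c).prod := by
    rw [hcp, hm]
    simp only [Multiset.map_add, Multiset.map_replicate, Multiset.map_singleton,
      Multiset.prod_add, Multiset.prod_replicate, Multiset.prod_singleton]
    have hs' : (X - C (0:ℝ)) ^ s = (X - C (0:ℝ)) ^ (s-1) * (X - C 0) := by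
      rw [← pow_succ, Nat.sub_add_cancel hs]
    rw [hs']
  have hroots : (KrsAlpha r s α * (KrsAlpha r s α)ᵀ).charpoly.roots = m := by
    rw [hprod, Polynomial.roots_multiset_prod_X_sub_C]
  rw [hroots, hm]
  simp only [Multiset.map_add, Multiset.map_replicate, Multiset.map_singleton]
  have hsa : Real.sqrt a = α * s := by
    rw [ha, show α^2*(s:ℝ)^2 = (α*s)^2 by ring, Real.sqrt_sq (by positivity)]
  have hsb : Real.sqrt b = Real.sqrt (α ^ 2 * s ^ 2 + (1 - α) ^ 2 * s * r) := by
    rw [hb, ha]; ring_nf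
  rw [hsa, hsb, Real.sqrt_zero]
  abel
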